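/- Let A be an N×N matrix over a complete nonarchimedean valued field with valuation ord, and suppose that for each column index j, all entries of column j have ord ≥ c_j for given real numbers c_j ≥ 0. Then the Newton polygon of det(I − tA) with respect to ord lies on or above the Newton polygon of the polynomial ∏_{j=1}^N (1 − p^{c_j} t), i.e., of the polygon with slopes c_1,…,c_N (where ord(p)=1). -/

import Mathlib

open Polynomial Finset

section aux
variable {K : Type} [Field K]

/-- `x` is zero or has valuation at least `b`. -/
def Vle (v : K → ℝ) (b : WithTop ℝ) (x : K) : Prop := x ≠ 0 → b ≤ (v x : WithTop ℝ)

theorem vle_zero (v : K → ℝ) (b : WithTop ℝ) : Vle v b (0 : K) := fun h => absurd rfl h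

theorem vle_mono {v : K → ℝ} {b b' : WithTop ℝ} {x : K} (h : b' ≤ b) (hx : Vle v b x) :
    Vle v b' x := fun hx0 => le_trans h (hx hx0)

theorem v_one {v : K → ℝ}
    (hv_mul : ∀ x y : K, x ≠ 0 → y ≠ 0 → v (x * y) = v x + v y) : v 1 = 0 := by
  have := hv_mul 1 1 one_ne_zero one_ne_zero
  rw [mul_one] at this; linarith

theorem v_neg {v : K → ℝ}
    (hv_mul : ∀ x y : K, x ≠ 0 → y ≠ 0 → v (x * y) = v x + v y)
    {x : K} (hx : x ≠ 0) : v (-x) = v x := by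
  have h1 : v ((-1 : K) * (-1)) = v (-1) + v (-1) :=
    hv_mul _ _ (by norm_num) (by norm_num)
  rw [neg_mul_neg, one_mul, v_one hv_mul] at h1
  have h2 : v ((-1 : K) * x) = v (-1) + v x := hv_mul _ _ (by norm_num) hx
  rw [neg_one_mul] at h2
  linarith

theorem vle_neg {v : K → ℝ}
    (hv_mul : ∀ x y : K, x ≠ 0 → y ≠ 0 → v (x * y) = v x + v y)
    {b : WithTop ℝ} {x : K} (hx : Vle v b x) : Vle v b (-x) := by
  intro h
  have hx0 : x ≠ 0 := by intro h0; simp [h0] at h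
  rw [v_neg hv_mul hx0]; exact hx hx0

theorem vle_mul {v : K → ℝ}
    (hv_mul : ∀ x y : K, x ≠ 0 → y ≠ 0 → v (x * y) = v x + v y)
    {b b' : WithTop ℝ} {x y : K} (hx : Vle v b x) (hy : Vle v b' y) :
    Vle v (b + b') (x * y) := by
  intro hxy
  have hx0 : x ≠ 0 := left_ne_zero_of_mul hxy
  have hy0 : y ≠ 0 := right_ne_zero_of_mul hxy
  rw [hv_mul x y hx0 hy0, WithTop.coe_add]
  exact add_le_add (hx hx0) (hy hy0)

theorem vle_add {v : K → ℝ}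
    (hv_add : ∀ x y : K, x ≠ 0 → y ≠ 0 → x + y ≠ 0 → min (v x) (v y) ≤ v (x + y))
    {b : WithTop ℝ} {x y : K} (hx : Vle v b x) (hy : Vle v b y) :
    Vle v b (x + y) := by
  intro hxy
  by_cases hx0 : x = 0
  · rw [hx0, zero_add] at hxy ⊢; exact hy hxy
  by_cases hy0 : y = 0
  · rw [hy0, add_zero] at hxy ⊢; exact hx hxy
  have := hv_add x y hx0 hy0 hxy
  calc b ≤ min ((v x : WithTop ℝ)) (v y) := le_min (hx hx0) (hy hy0)
    _ = ((min (v x) (v y) : ℝ) : WithTop ℝ) := by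
        rcases le_total (v x) (v y) with h | h <;> simp [min_eq_left, min_eq_right, h]
    _ ≤ (v (x + y) : WithTop ℝ) := by exact_mod_cast this

theorem vle_sum {v : K → ℝ}
    (hv_add : ∀ x y : K, x ≠ 0 → y ≠ 0 → x + y ≠ 0 → min (v x) (v y) ≤ v (x + y))
    {ι : Type*} {b : WithTop ℝ} {s : Finset ι} {f : ι → K}
    (h : ∀ i ∈ s, Vle v b (f i)) : Vle v b (∑ i ∈ s, f i) :=
  Finset.sum_induction f (Vle v b) (fun _ _ hx hy => vle_add hv_add hx hy) (vle_zero v b) h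

/-- Key lemma: coefficient bound for a product of linear polynomials. -/
theorem vle_prod_coeff {v : K → ℝ}
    (hv_mul : ∀ x y : K, x ≠ 0 → y ≠ 0 → v (x * y) = v x + v y)
    (hv_add : ∀ x y : K, x ≠ 0 → y ≠ 0 → x + y ≠ 0 → min (v x) (v y) ≤ v (x + y))
    {ι : Type*} [DecidableEq ι] (c : ι → ℝ) (p : ι → Polynomial K)
    (h0 : ∀ j, Vle v ((0 : ℝ) : WithTop ℝ) ((p j).coeff 0))
    (h1 : ∀ j, Vle v ((c j : ℝ) : WithTop ℝ) ((p j).coeff 1))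
    (h2 : ∀ j k, (p j).coeff (k + 2) = 0) :
    ∀ (s : Finset ι) (i : ℕ),
      Vle v ((s.powersetCard i).inf (fun S => ((∑ j ∈ S, c j : ℝ) : WithTop ℝ)))
        ((∏ j ∈ s, p j).coeff i) := by
  intro s
  induction s using Finset.induction_on with
  | empty =>
    intro i
    match i with
    | 0 =>
      rw [Finset.prod_empty]
      simp only [Finset.powersetCard_zero, Finset.inf_singleton, Finset.sum_empty,
        Polynomial.coeff_one_zero]
      intro _
      have := v_one hv_mul
      simp [this]
    | (n + 1) =>
      rw [Finset.prod_empty]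
      simpa [Polynomial.coeff_one] using vle_zero v _
  | @insert a s ha ih =>
    intro i
    rw [Finset.prod_insert ha, Polynomial.coeff_mul]
    apply vle_sum hv_add
    rintro ⟨k, l⟩ hkl
    rw [Finset.HasAntidiagonal.mem_antidiagonal] at hkl
    simp only at hkl ⊢
    match k with
    | 0 =>
      have hstep : ((insert a s).powersetCard i).inf
            (fun S => ((∑ j ∈ S, c j : ℝ) : WithTop ℝ)) ≤
          ((0 : ℝ) : WithTop ℝ) + (s.powersetCard l).inf
            (fun S => ((∑ j ∈ S, c j : ℝ) : WithTop ℝ)) := by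
        rw [← hkl]
        simp only [WithTop.coe_zero, zero_add]
        exact Finset.inf_mono (f := fun S => ((∑ j ∈ S, c j : ℝ) : WithTop ℝ))
          (Finset.powersetCard_mono (Finset.subset_insert a s))
      exact vle_mono hstep (vle_mul hv_mul (h0 a) (ih l))
    | 1 =>
      have hstep : ((insert a s).powersetCard i).inf
            (fun S => ((∑ j ∈ S, c j : ℝ) : WithTop ℝ)) ≤
          ((c a : ℝ) : WithTop ℝ) + (s.powersetCard l).inf
            (fun S => ((∑ j ∈ S, c j : ℝ) : WithTop ℝ)) := by
        rcases Finset.eq_empty_or_nonempty (s.powersetCard l) with he | hne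
        · rw [he]; simp
        · obtain ⟨S, hS, hSeq⟩ := Finset.exists_mem_eq_inf _ hne
            (fun S => ((∑ j ∈ S, c j : ℝ) : WithTop ℝ))
          rw [hSeq]
          rw [Finset.mem_powersetCard] at hS
          have haS : a ∉ S := fun h => ha (hS.1 h)
          have hmem : insert a S ∈ (insert a s).powersetCard i := by
            rw [Finset.mem_powersetCard]
            constructor
            · exact Finset.insert_subset_insert a hS.1
            · rw [Finset.card_insert_of_notMem haS, hS.2, ← hkl]
              omega
          calc ((insert a s).powersetCard i).inf (fun S => ((∑ j ∈ S, c j : ℝ) : WithTop ℝ))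
              ≤ ((∑ j ∈ insert a S, c j : ℝ) : WithTop ℝ) := Finset.inf_le hmem
            _ = ((c a : ℝ) : WithTop ℝ) + ((∑ j ∈ S, c j : ℝ) : WithTop ℝ) := by
                rw [Finset.sum_insert haS, WithTop.coe_add]
      exact vle_mono hstep (vle_mul hv_mul (h1 a) (ih l))
    | (m + 2) =>
      rw [h2 a m, zero_mul]
      exact vle_zero v _

end aux

/-- Let `A` be an `N×N` matrix over a field with a (rank-one) valuation `ord = v`, and
suppose each entry of column `j` has `v ≥ c_j`, with `c_j ≥ 0`.  Then the Newton
polygon of `det(I − tA)` with respect to `v` lies on or above the polygon with slopes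
`c_1, …, c_N` (the Newton polygon of `∏_j (1 − p^{c_j} t)` when `v(p) = 1`):
equivalently, since that comparison polygon is convex with value
`min_{|S| = i} ∑_{j ∈ S} c_j` at abscissa `i`, every coefficient of `det(I − tA)`
satisfies `v(coeff i) ≥ min_{|S| = i} ∑_{j ∈ S} c_j`. -/
theorem stmt19 (K : Type) [Field K] (v : K → ℝ)
    (hv_mul : ∀ x y : K, x ≠ 0 → y ≠ 0 → v (x * y) = v x + v y)
    (hv_add : ∀ x y : K, x ≠ 0 → y ≠ 0 → x + y ≠ 0 → min (v x) (v y) ≤ v (x + y))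
    (N : ℕ) (A : Matrix (Fin N) (Fin N) K) (c : Fin N → ℝ)
    (hc : ∀ j, 0 ≤ c j)
    (hA : ∀ i j, A i j ≠ 0 → c j ≤ v (A i j)) :
    ∀ i : ℕ, ∀ hi : i ≤ N,
      (Matrix.det (1 - (Polynomial.X : Polynomial K) • A.map Polynomial.C)).coeff i ≠ 0 →
      (Finset.powersetCard i (Finset.univ : Finset (Fin N))).inf'
          (by
            rw [Finset.powersetCard_nonempty]
            simpa using hi)
          (fun S => ∑ j ∈ S, c j) ≤
        v ((Matrix.det (1 - (Polynomial.X : Polynomial K) • A.map Polynomial.C)).coeff i) := by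
  intro i hi hne
  set M : Matrix (Fin N) (Fin N) (Polynomial K) :=
    1 - (Polynomial.X : Polynomial K) • A.map Polynomial.C with hM
  -- entries of M
  have hMentry : ∀ r j, M r j =
      (if r = j then (1 : Polynomial K) else 0) - Polynomial.X * Polynomial.C (A r j) := by
    intro r j
    simp [hM, Matrix.sub_apply, Matrix.smul_apply, Matrix.one_apply, Matrix.map_apply,
      smul_eq_mul]
  -- the key Vle statement for the determinant coefficient
  have key : Vle v ((Finset.powersetCard i (Finset.univ : Finset (Fin N))).inf
      (fun S => ((∑ j ∈ S, c j : ℝ) : WithTop ℝ))) (M.det.coeff i) := by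
    rw [Matrix.det_apply]
    rw [Polynomial.finset_sum_coeff]
    apply vle_sum hv_add
    intro σ _
    -- sign is ±1
    have hterm : Vle v ((Finset.powersetCard i (Finset.univ : Finset (Fin N))).inf
        (fun S => ((∑ j ∈ S, c j : ℝ) : WithTop ℝ))) ((∏ j, M (σ j) j).coeff i) := by
      apply vle_prod_coeff hv_mul hv_add c (fun j => M (σ j) j)
      · intro j
        rw [hMentry]
        have hco : ((if σ j = j then (1 : Polynomial K) else 0) -
            Polynomial.X * Polynomial.C (A (σ j) j)).coeff 0
            = if σ j = j then (1 : K) else 0 := by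
          split <;> simp
        by_cases h : σ j = j
        · rw [hco, if_pos h]
          intro _
          simp [v_one hv_mul]
        · rw [hco, if_neg h]
          exact vle_zero v _
      · intro j
        rw [hMentry]
        intro hne0
        have hco : ((if σ j = j then (1 : Polynomial K) else 0) -
            Polynomial.X * Polynomial.C (A (σ j) j)).coeff 1 = -(A (σ j) j) := by
          have h1 : ((if σ j = j then (1 : Polynomial K) else 0)).coeff 1 = 0 := by
            split <;> simp [Polynomial.coeff_one]
          have h2 : (Polynomial.X * Polynomial.C (A (σ j) j)).coeff 1 = A (σ j) j := by
            simp
          rw [Polynomial.coeff_sub, h1, h2, zero_sub]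
        rw [hco] at hne0 ⊢
        have hA0 : A (σ j) j ≠ 0 := fun h => hne0 (by rw [h, neg_zero])
        rw [v_neg hv_mul hA0]
        exact_mod_cast hA _ _ hA0
      · intro j k
        rw [hMentry]
        have h1 : ((if σ j = j then (1 : Polynomial K) else 0)).coeff (k + 2) = 0 := by
          split <;> simp [Polynomial.coeff_one]
        have h2 : (Polynomial.X * Polynomial.C (A (σ j) j)).coeff (k + 2) = 0 := by
          have : k + 2 = (k + 1) + 1 := rfl
          rw [this, Polynomial.coeff_X_mul, Polynomial.coeff_C]
          simp
        rw [Polynomial.coeff_sub, h1, h2, sub_zero]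
    -- now handle the sign smul
    rcases Int.units_eq_one_or (Equiv.Perm.sign σ) with hs | hs
    · rw [hs]
      simpa using hterm
    · rw [hs]
      have : ((-1 : ℤˣ) • ∏ j, M (σ j) j).coeff i = -((∏ j, M (σ j) j).coeff i) := by
        simp
      rw [this]
      exact vle_neg hv_mul hterm
  -- conclude
  have hNE : (Finset.powersetCard i (Finset.univ : Finset (Fin N))).Nonempty := by
    rw [Finset.powersetCard_nonempty]; simpa using hi
  have h3 := key hne
  rw [← WithTop.coe_le_coe, Finset.coe_inf' hNE]
  simpa [Function.comp] using h3
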